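/- A complete simple game with two types of voters is weighted if and only if M·P < 1, where M = max over winning types (x,y) and losing types (x',y') with x' ≥ x of (x'-x)/(y-y'), and P = max over winning types (x,y) and losing types (x',y') with x' < x of (y'-y)/(x-x'). Moreover 0 ≤ M < 1 and P ≥ 1. -/
import Mathlib


/-- A complete simple game with two types of voters (class sizes `n1, n2`,
winning coalition types given by `Win`) is weighted iff `M * P < 1`,
where `M` and `P` are the extremal slope parameters; moreover `0 ≤ M < 1 ≤ P`. -/
theorem stmt8 (n1 n2 : ℕ) (Win : ℕ → ℕ → Prop)
    (hupset : ∀ x y x' y' : ℕ, x ≤ n1 → y ≤ n2 → x' ≤ x → x' + y' ≤ x + y →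
      Win x' y' → Win x y)
    (hP1 : ∃ a b : ℕ, a ≤ n1 ∧ b + 1 ≤ n2 ∧ 0 < a ∧ Win a b ∧ ¬ Win (a - 1) (b + 1))
    (M P : ℝ)
    (hMmax : ∃ x y x' y' : ℕ, x ≤ n1 ∧ y ≤ n2 ∧ x' ≤ n1 ∧ y' ≤ n2 ∧
      Win x y ∧ ¬ Win x' y' ∧ x ≤ x' ∧ M = ((x' : ℝ) - x) / ((y : ℝ) - y'))
    (hMub : ∀ x y x' y' : ℕ, x ≤ n1 → y ≤ n2 → x' ≤ n1 → y' ≤ n2 →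
      Win x y → ¬ Win x' y' → x ≤ x' → ((x' : ℝ) - x) / ((y : ℝ) - y') ≤ M)
    (hPmax : ∃ x y x' y' : ℕ, x ≤ n1 ∧ y ≤ n2 ∧ x' ≤ n1 ∧ y' ≤ n2 ∧
      Win x y ∧ ¬ Win x' y' ∧ x' < x ∧ P = ((y' : ℝ) - y) / ((x : ℝ) - x'))
    (hPub : ∀ x y x' y' : ℕ, x ≤ n1 → y ≤ n2 → x' ≤ n1 → y' ≤ n2 →
      Win x y → ¬ Win x' y' → x' < x → ((y' : ℝ) - y) / ((x : ℝ) - x') ≤ P) :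
    ((∃ w1 w2 : ℤ, w2 < w1 ∧ 0 ≤ w2 ∧
        ∀ x y x' y' : ℕ, x ≤ n1 → y ≤ n2 → x' ≤ n1 → y' ≤ n2 →
          Win x y → ¬ Win x' y' →
          0 < ((x : ℤ) - x') * w1 + ((y : ℤ) - y') * w2) ↔ M * P < 1) ∧
      0 ≤ M ∧ M < 1 ∧ 1 ≤ P := by
  obtain ⟨a, b, ha1, hb1, ha0, hWab, hLab⟩ := hP1
  -- key: for winning (x,y), losing (x',y') with x ≤ x', we have x'+y' < x+y
  have key : ∀ x y x' y' : ℕ, x ≤ n1 → y ≤ n2 → x' ≤ n1 → y' ≤ n2 →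
      Win x y → ¬Win x' y' → x ≤ x' → x' + y' < x + y := by
    intro x y x' y' hx hy hx' hy' hw hl hle
    by_contra h
    exact hl (hupset x' y' x y hx' hy' hle (le_of_not_gt h) hw)
  obtain ⟨mx, my, mx', my', hx1, hy1, hx'1, hy'1, hW, hL, hxx', hMeq⟩ := hMmax
  have hmkey := key mx my mx' my' hx1 hy1 hx'1 hy'1 hW hL hxx'
  have hden : (0:ℝ) < (my:ℝ) - my' := by
    have h1 : my' < my := by omega
    have h2 : (my':ℝ) < my := by exact_mod_cast h1
    linarith
  have hnum0 : (0:ℝ) ≤ (mx':ℝ) - mx := by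
    have h2 : (mx:ℝ) ≤ mx' := by exact_mod_cast hxx'
    linarith
  have hnumlt : (mx':ℝ) - mx < (my:ℝ) - my' := by
    have h2 : (mx':ℝ) + my' < (mx:ℝ) + my := by exact_mod_cast hmkey
    linarith
  have hM0 : 0 ≤ M := by
    rw [hMeq]; exact div_nonneg hnum0 hden.le
  have hM1 : M < 1 := by
    rw [hMeq, div_lt_one hden]; exact hnumlt
  have hPge1 : 1 ≤ P := by
    have h := hPub a b (a-1) (b+1) ha1 (by omega) (by omega) hb1 hWab hLab (by omega)
    have e1 : ((b+1 : ℕ):ℝ) - (b:ℝ) = 1 := by push_cast; ring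
    have e2 : ((a:ℝ) - ((a-1 : ℕ):ℝ)) = 1 := by
      have : ((a-1:ℕ):ℝ) = (a:ℝ) - 1 := by
        have := Nat.cast_sub (by omega : 1 ≤ a) (R := ℝ); simpa using this
      rw [this]; ring
    rw [e1, e2] at h
    simpa using h
  have hPpos : (0:ℝ) < P := lt_of_lt_of_le one_pos hPge1
  refine ⟨⟨?_, ?_⟩, hM0, hM1, hPge1⟩
  · -- weights ⇒ M*P < 1
    rintro ⟨w1, w2, hw12, hw2, hsep⟩
    have hw1pos : (0:ℤ) < w1 := lt_of_le_of_lt hw2 hw12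
    have hMsep := hsep mx my mx' my' hx1 hy1 hx'1 hy'1 hW hL
    have hw2pos : (0:ℤ) < w2 := by
      rcases lt_or_eq_of_le hw2 with h | h
      · exact h
      · exfalso
        rw [← h] at hMsep
        have hle : (mx:ℤ) ≤ mx' := by exact_mod_cast hxx'
        nlinarith
    obtain ⟨px, py, px', py', hpx1, hpy1, hpx'1, hpy'1, hpW, hpL, hpxx', hPeq⟩ := hPmax
    have hPsep := hsep px py px' py' hpx1 hpy1 hpx'1 hpy'1 hpW hpL
    -- real versions
    have hw1R : (0:ℝ) < (w1:ℝ) := by exact_mod_cast hw1pos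
    have hw2R : (0:ℝ) < (w2:ℝ) := by exact_mod_cast hw2pos
    have hMlt : M < (w2:ℝ) / w1 := by
      rw [hMeq, div_lt_div_iff₀ hden hw1R]
      have : ((mx':ℝ) - mx) * w1 < ((my:ℝ) - my') * w2 := by
        have : ((mx':ℤ) - mx) * w1 < ((my:ℤ) - my') * w2 := by linarith
        exact_mod_cast this
      linarith [this]
    have hpden : (0:ℝ) < (px:ℝ) - px' := by
      have : (px':ℝ) < px := by exact_mod_cast hpxx'
      linarith
    have hPlt : P < (w1:ℝ) / w2 := by
      rw [hPeq, div_lt_div_iff₀ hpden hw2R]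
      have : ((py':ℤ) - py) * w2 < ((px:ℤ) - px') * w1 := by linarith
      have h2 : ((py':ℝ) - py) * w2 < ((px:ℝ) - px') * w1 := by exact_mod_cast this
      linarith [h2]
    have := mul_lt_mul'' hMlt hPlt hM0 hPpos.le
    calc M * P < ((w2:ℝ)/w1) * ((w1:ℝ)/w2) := this
      _ = 1 := by field_simp
  · -- M*P < 1 ⇒ weights
    intro hMP
    have hM1P : M < 1 / P := by
      rw [lt_div_iff₀ hPpos]; exact hMP
    obtain ⟨q, hq1, hq2⟩ := exists_rat_btwn hM1P
    have hqpos : (0:ℝ) < (q:ℝ) := lt_of_le_of_lt hM0 hq1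
    have hqposQ : 0 < q := by exact_mod_cast hqpos
    have hq1P : (q:ℝ) * P < 1 := (lt_div_iff₀ hPpos).mp hq2
    have hqlt1 : q < 1 := by
      have : (q:ℝ) < 1 := by
        have h1P : 1/P ≤ 1 := by
          rw [div_le_one hPpos]; exact hPge1
        linarith
      exact_mod_cast this
    have hcast : (q:ℝ) = (q.num:ℝ) / (q.den:ℝ) := by rw [Rat.cast_def]
    have hdpR : (0:ℝ) < (q.den:ℝ) := by exact_mod_cast q.pos
    refine ⟨(q.den : ℤ), q.num, ?_, ?_, ?_⟩
    · have h1 : (q:ℝ) < 1 := by exact_mod_cast hqlt1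
      rw [hcast, div_lt_one hdpR] at h1
      exact_mod_cast h1
    · exact le_of_lt (Rat.num_pos.mpr hqposQ)
    · intro x y x' y' hx hy hx' hy' hw hl
      have hdenpos : (0:ℝ) < ((q.den : ℤ) : ℝ) := by
        exact_mod_cast q.pos
      have hnumR : ((q.num : ℤ) : ℝ) = (q:ℝ) * ((q.den : ℤ) : ℝ) := by
        rw [hcast]
        push_cast
        rw [div_mul_cancel₀]
        positivity
      -- prove the real inequality 0 < (x - x') + (y - y') * q
      have main : (0:ℝ) < ((x:ℝ) - x') + ((y:ℝ) - y') * q := by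
        rcases le_or_gt x x' with hc | hc
        · have hk := key x y x' y' hx hy hx' hy' hw hl hc
          have hd : (0:ℝ) < (y:ℝ) - y' := by
            have : (x':ℝ) + y' < (x:ℝ) + y := by exact_mod_cast hk
            have : (x:ℝ) ≤ x' := by exact_mod_cast hc
            have h3 : (x':ℝ) + y' < (x:ℝ) + y := by exact_mod_cast hk
            linarith
          have hub := hMub x y x' y' hx hy hx' hy' hw hl hc
          have : ((x':ℝ) - x) / ((y:ℝ) - y') < q := lt_of_le_of_lt hub hq1
          have h4 : (x':ℝ) - x < q * ((y:ℝ) - y') := (div_lt_iff₀ hd).mp this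
          nlinarith
        · have hub := hPub x y x' y' hx hy hx' hy' hw hl hc
          have hd : (0:ℝ) < (x:ℝ) - x' := by
            have : (x':ℝ) < x := by exact_mod_cast hc
            linarith
          have h4 : (y':ℝ) - y ≤ P * ((x:ℝ) - x') := (div_le_iff₀ hd).mp hub
          rcases le_or_gt y' y with hyy | hyy
          · have hyyR : (0:ℝ) ≤ (y:ℝ) - y' := by
              have : (y':ℝ) ≤ y := by exact_mod_cast hyy
              linarith
            have := mul_nonneg hyyR hqpos.le
            linarith
          · have h5 : ((y':ℝ) - y) * q ≤ (P * ((x:ℝ) - x')) * q :=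
              mul_le_mul_of_nonneg_right h4 hqpos.le
            have h6 := mul_lt_mul_of_pos_right hq1P hd
            have hv : ((y:ℝ) - y') * q = -(((y':ℝ) - y) * q) := by ring
            have heq : (P * ((x:ℝ) - x')) * q = (q:ℝ) * P * ((x:ℝ) - x') := by ring
            linarith
      -- transfer back to integers
      have mainR : (0:ℝ) < ((x:ℝ) - x') * ((q.den:ℤ):ℝ) + ((y:ℝ) - y') * ((q.num:ℤ):ℝ) := by
        rw [hnumR]
        have h7 : (0:ℝ) < (((x:ℝ) - x') + ((y:ℝ) - y') * q) * ((q.den:ℤ):ℝ) :=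
          mul_pos main (by exact_mod_cast q.pos)
        linarith [h7]
      exact_mod_cast mainR
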